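/- Let α ∈ (0,1] and suppose that for a sequence of iterations i = 1,...,T we have positive reals r_i (remaining elements), f_i (makespan of iteration i), x_i (elements newly covered), with x_i > 0, Σ_i x_i = r_1, r_{i+1} = r_i - x_i, and define h_i = (f_i · r_i)/((2/α)·x_i). If g: ℝ≥0 → ℝ≥0 is the nondecreasing step function of an optimal schedule such that for each i the number of elements covered by time ⌊h_i⌋ among the r_i remaining is at most r_i/2 (so g's coverage curve has height ≥ h_i at position r_i/2 from the right), then Σ_i f_i·r_i ≤ (4/α)·(area under g) = (4/α)·OPT. -/

import Mathlib

/-- Abstract histogram-shrinkage argument: with `r i` remaining elements, makespans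
`f i` and newly covered counts `x i` at each greedy iteration, and `g` the
nondecreasing coverage curve of an optimal schedule satisfying
`g(r 0 - r i / 2) ≥ h i` where `h i = f i · r i / ((2/α)·x i)`, the greedy cost
`Σ f i · r i` is at most `(4/α)` times the area under `g`. -/
theorem histogram_shrinkage (α : ℝ) (hα : α ∈ Set.Ioc (0 : ℝ) 1) (T : ℕ)
    (r f x : ℕ → ℝ)
    (hr : ∀ i < T, 0 < r i) (hfpos : ∀ i < T, 0 < f i) (hx : ∀ i < T, 0 < x i)
    (hrec : ∀ i < T, r (i + 1) = r i - x i)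
    (hsum : ∑ i ∈ Finset.range T, x i = r 0)
    (g : ℝ → ℝ) (hg : Monotone g) (hg0 : ∀ t, 0 ≤ g t)
    (hcut : ∀ i < T, f i * r i / ((2 / α) * x i) ≤ g (r 0 - r i / 2)) :
    ∑ i ∈ Finset.range T, f i * r i ≤ (4 / α) * ∫ t in (0 : ℝ)..(r 0), g t := by
  obtain ⟨hα0, hα1⟩ := hα
  -- r i = tail sum of x, for i ≤ T
  have hrval : ∀ i ≤ T, r i = ∑ j ∈ Finset.Ico i T, x j := by
    intro i hi
    induction i with
    | zero => rw [← Finset.range_eq_Ico]; exact hsum.symm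
    | succ n ih =>
      have hn : n < T := hi
      rw [hrec n hn, ih hn.le, Finset.sum_eq_sum_Ico_succ_bot hn]
      ring
  have hrT : r T = 0 := by rw [hrval T le_rfl]; simp
  have hrnn : ∀ i ≤ T, 0 ≤ r i := by
    intro i hi
    rw [hrval i hi]
    exact Finset.sum_nonneg fun j hj => (hx j (Finset.mem_Ico.mp hj).2).le
  -- columns
  obtain ⟨c, hc⟩ : ∃ c : ℕ → ℝ, ∀ i, c i = r 0 - r i / 2 := ⟨_, fun _ => rfl⟩
  have hcstep : ∀ i < T, c (i + 1) - c i = x i / 2 := by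
    intro i hi
    rw [hc, hc, hrec i hi]
    ring
  have hcle : ∀ i < T, c i ≤ c (i + 1) := by
    intro i hi
    have h1 := hcstep i hi
    have h2 := hx i hi
    linarith
  have hint : ∀ a b : ℝ, IntervalIntegrable g MeasureTheory.volume a b :=
    fun a b => hg.intervalIntegrable
  -- per-term bound
  have key : ∀ i < T, f i * r i ≤ (4 / α) * ∫ t in (c i)..(c (i + 1)), g t := by
    intro i hi
    have hgc : ∀ t ∈ Set.Icc (c i) (c (i + 1)), g (c i) ≤ g t :=
      fun t ht => hg ht.1
    have h1 : (∫ t in (c i)..(c (i + 1)), g (c i)) ≤ ∫ t in (c i)..(c (i + 1)), g t :=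
      intervalIntegral.integral_mono_on (hcle i hi) intervalIntegrable_const (hint _ _) hgc
    rw [intervalIntegral.integral_const, smul_eq_mul, hcstep i hi] at h1
    have h2 : f i * r i / ((2 / α) * x i) ≤ g (c i) := by
      rw [hc]; exact hcut i hi
    have hxi := hx i hi
    have hri := hr i hi
    have hfi := hfpos i hi
    have hgnn := hg0 (c i)
    have hcut' := h2
    have hdiv : f i * r i = ((2 / α) * x i) * (f i * r i / ((2 / α) * x i)) := by
      field_simp
    calc f i * r i = ((2 / α) * x i) * (f i * r i / ((2 / α) * x i)) := hdiv
      _ ≤ ((2 / α) * x i) * g (c i) := by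
          apply mul_le_mul_of_nonneg_left hcut'
          positivity
      _ = (4 / α) * (x i / 2 * g (c i)) := by ring
      _ ≤ (4 / α) * ∫ t in (c i)..(c (i + 1)), g t := by
          apply mul_le_mul_of_nonneg_left h1
          positivity
  have hsum_int : ∑ i ∈ Finset.range T, ∫ t in (c i)..(c (i + 1)), g t
      = ∫ t in (c 0)..(c T), g t :=
    intervalIntegral.sum_integral_adjacent_intervals fun k _ => hint _ _
  have step1 : ∑ i ∈ Finset.range T, f i * r i
      ≤ (4 / α) * ∫ t in (c 0)..(c T), g t := by
    rw [← hsum_int, Finset.mul_sum]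
    exact Finset.sum_le_sum fun i hi => key i (Finset.mem_range.mp hi)
  have hc0 : c 0 = r 0 / 2 := by rw [hc]; ring
  have hcT : c T = r 0 := by rw [hc, hrT]; ring
  have hr0 : 0 ≤ r 0 := hrnn 0 (Nat.zero_le _)
  have hsplit : (∫ t in (0:ℝ)..(r 0), g t)
      = (∫ t in (0:ℝ)..(r 0 / 2), g t) + ∫ t in (r 0 / 2)..(r 0), g t :=
    (intervalIntegral.integral_add_adjacent_intervals (hint _ _) (hint _ _)).symm
  have hnn1 : 0 ≤ ∫ t in (0:ℝ)..(r 0 / 2), g t :=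
    intervalIntegral.integral_nonneg (by linarith) fun t _ => hg0 t
  have hfinal : (∫ t in (c 0)..(c T), g t) ≤ ∫ t in (0:ℝ)..(r 0), g t := by
    rw [hc0, hcT, hsplit]; linarith
  calc ∑ i ∈ Finset.range T, f i * r i ≤ (4 / α) * ∫ t in (c 0)..(c T), g t := step1
    _ ≤ (4 / α) * ∫ t in (0:ℝ)..(r 0), g t := by
        apply mul_le_mul_of_nonneg_left hfinal
        positivity
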